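/- With the straggler-resilient assignment as above (columns of A_R have b-weighted sums in [1, 1+δ]), let Y_j be an optimal set of k-median centers for the local dataset P_j, with weights w_j(c) = |cluster(c, P_j)|, and let (Y, w) be the union over j ∈ R with weights scaled by b_j. Then for any set of k centers C ⊆ ℝ^d: cost(P, C) − Σ_{j ∈ R} b_j · cost(P_j, Y_j) ≤ cost(Y, C, w) ≤ 2(1+δ) · cost(P, C), where cost uses the (unsquared) Euclidean distance to the closest center. -/

import Mathlib

open Finset

noncomputable def distToSet {d : ℕ} (p : EuclideanSpace ℝ (Fin d))
    (C : Finset (EuclideanSpace ℝ (Fin d))) : ℝ :=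
  sInf ((fun c => dist p c) '' (C : Set (EuclideanSpace ℝ (Fin d))))

noncomputable def cost {d : ℕ} (P C : Finset (EuclideanSpace ℝ (Fin d))) : ℝ :=
  ∑ p ∈ P, distToSet p C

lemma distToSet_nonneg {d : ℕ} (p : EuclideanSpace ℝ (Fin d))
    (C : Finset (EuclideanSpace ℝ (Fin d))) : 0 ≤ distToSet p C := by
  apply Real.sInf_nonneg
  rintro x ⟨c, _, rfl⟩; exact dist_nonneg

lemma distToSet_le {d : ℕ} (p c : EuclideanSpace ℝ (Fin d))
    {C : Finset (EuclideanSpace ℝ (Fin d))} (hc : c ∈ C) :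
    distToSet p C ≤ dist p c := by
  apply csInf_le
  · exact ⟨0, by rintro x ⟨c', _, rfl⟩; exact dist_nonneg⟩
  · exact ⟨c, hc, rfl⟩

lemma exists_distToSet {d : ℕ} (p : EuclideanSpace ℝ (Fin d))
    {C : Finset (EuclideanSpace ℝ (Fin d))} (hC : C.Nonempty) :
    ∃ c ∈ C, distToSet p C = dist p c := by
  have hfin : ((fun c => dist p c) '' (C : Set (EuclideanSpace ℝ (Fin d)))).Finite :=
    C.finite_toSet.image _
  have hne : ((fun c => dist p c) '' (C : Set (EuclideanSpace ℝ (Fin d)))).Nonempty :=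
    ⟨_, ⟨hC.choose, hC.choose_spec, rfl⟩⟩
  obtain ⟨c, hc, h⟩ := hne.csInf_mem hfin
  exact ⟨c, hc, h.symm⟩

lemma distToSet_triangle {d : ℕ} (p q : EuclideanSpace ℝ (Fin d))
    {C : Finset (EuclideanSpace ℝ (Fin d))} (hC : C.Nonempty) :
    distToSet p C ≤ dist p q + distToSet q C := by
  obtain ⟨c, hc, h⟩ := exists_distToSet q hC
  calc distToSet p C ≤ dist p c := distToSet_le p c hc
    _ ≤ dist p q + dist q c := dist_triangle p q c
    _ = dist p q + distToSet q C := by rw [h]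

lemma swap_sum_aux {d : ℕ} {ι : Type*} [DecidableEq ι]
    [DecidableEq (EuclideanSpace ℝ (Fin d))]
    (P : Finset (EuclideanSpace ℝ (Fin d)))
    (R : Finset ι) (Pl : ι → Finset (EuclideanSpace ℝ (Fin d)))
    (hPl : ∀ j ∈ R, Pl j ⊆ P) (b : ι → ℝ)
    (f : EuclideanSpace ℝ (Fin d) → ℝ) :
    ∑ j ∈ R, b j * ∑ x ∈ Pl j, f x
      = ∑ p ∈ P, (∑ j ∈ R.filter (fun j => p ∈ Pl j), b j) * f p := by
  have h1 : ∀ j ∈ R, b j * ∑ x ∈ Pl j, f x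
      = ∑ p ∈ P, if p ∈ Pl j then b j * f p else 0 := by
    intro j hj
    have hfe : P.filter (fun p => p ∈ Pl j) = Pl j := by
      ext x
      simp only [Finset.mem_filter]
      exact ⟨fun h => h.2, fun hx => ⟨hPl j hj hx, hx⟩⟩
    rw [Finset.mul_sum]
    calc ∑ x ∈ Pl j, b j * f x
        = ∑ x ∈ P.filter (fun p => p ∈ Pl j), b j * f x := by rw [hfe]
      _ = ∑ p ∈ P, if p ∈ Pl j then b j * f p else 0 := Finset.sum_filter _ _
  calc ∑ j ∈ R, b j * ∑ x ∈ Pl j, f x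
      = ∑ j ∈ R, ∑ p ∈ P, if p ∈ Pl j then b j * f p else 0 :=
        Finset.sum_congr rfl h1
    _ = ∑ p ∈ P, ∑ j ∈ R, if p ∈ Pl j then b j * f p else 0 := Finset.sum_comm
    _ = ∑ p ∈ P, (∑ j ∈ R.filter (fun j => p ∈ Pl j), b j) * f p := by
        refine Finset.sum_congr rfl fun p _ => ?_
        rw [← Finset.sum_filter, Finset.sum_mul]

lemma fiber_sum_aux {α β : Type*} [DecidableEq α] [DecidableEq β]
    (s : Finset α) (t : Finset β) (φ : α → β) (hφ : ∀ x ∈ s, φ x ∈ t) (g : β → ℝ) :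
    ∑ y ∈ t, ((s.filter (fun x => φ x = y)).card : ℝ) * g y = ∑ x ∈ s, g (φ x) := by
  rw [← Finset.sum_fiberwise_of_maps_to hφ (fun x => g (φ x))]
  refine Finset.sum_congr rfl fun y hy => ?_
  rw [Finset.sum_congr rfl (fun x hx => by rw [(Finset.mem_filter.1 hx).2]),
    Finset.sum_const, nsmul_eq_mul]

/-- Lemma 3 (quality of the weighted summary): the union `Y` of the local optimal
`k`-median centers, with cluster-size weights rescaled by the recovery vector `b`,
satisfies `cost(P,C) - Σ_j b_j cost(P_j, Y_j) ≤ cost(Y,C,w) ≤ 2(1+δ) cost(P,C)`. -/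
theorem kmedian_summary_sandwich {d k : ℕ} {ι : Type*} [DecidableEq ι]
    [DecidableEq (EuclideanSpace ℝ (Fin d))]
    (P : Finset (EuclideanSpace ℝ (Fin d)))
    (R : Finset ι) (Pl : ι → Finset (EuclideanSpace ℝ (Fin d)))
    (hPl : ∀ j ∈ R, Pl j ⊆ P)
    (b : ι → ℝ) (δ : ℝ) (hδ : 0 < δ)
    (hb : ∀ j ∈ R, 0 ≤ b j)
    -- straggler-resilience: every point's total recovery weight lies in [1, 1+δ]
    (hcov : ∀ p ∈ P,
      1 ≤ ∑ j ∈ R.filter (fun j => p ∈ Pl j), b j ∧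
      ∑ j ∈ R.filter (fun j => p ∈ Pl j), b j ≤ 1 + δ)
    -- Y j : optimal k-median centers of the local dataset Pl j
    (Y : ι → Finset (EuclideanSpace ℝ (Fin d)))
    (hYk : ∀ j ∈ R, (Y j).card = k ∧ (Y j).Nonempty)
    (hYopt : ∀ j ∈ R, ∀ C' : Finset (EuclideanSpace ℝ (Fin d)),
      C'.card = k → C'.Nonempty → cost (Pl j) (Y j) ≤ cost (Pl j) C')
    -- cl j x : the center of Y j closest to x (defining the clusters of Pl j)
    (cl : ι → EuclideanSpace ℝ (Fin d) → EuclideanSpace ℝ (Fin d))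
    (hcl : ∀ j ∈ R, ∀ x ∈ Pl j,
      cl j x ∈ Y j ∧ dist x (cl j x) = distToSet x (Y j))
    (C : Finset (EuclideanSpace ℝ (Fin d))) (hCk : C.card = k) (hCne : C.Nonempty) :
    cost P C - (∑ j ∈ R, b j * cost (Pl j) (Y j)) ≤
      (∑ j ∈ R, b j * ∑ y ∈ Y j,
        (((Pl j).filter (fun x => cl j x = y)).card : ℝ) * distToSet y C) ∧
    (∑ j ∈ R, b j * ∑ y ∈ Y j,
        (((Pl j).filter (fun x => cl j x = y)).card : ℝ) * distToSet y C) ≤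
      2 * (1 + δ) * cost P C := by
  -- rewrite the weighted center sum as a sum over points of each Pl j
  have hS : ∀ j ∈ R,
      (∑ y ∈ Y j, (((Pl j).filter (fun x => cl j x = y)).card : ℝ) * distToSet y C)
        = ∑ x ∈ Pl j, distToSet (cl j x) C := fun j hj =>
    fiber_sum_aux (Pl j) (Y j) (cl j) (fun x hx => (hcl j hj x hx).1) _
  -- cost P C ≤ ∑ j b j * cost (Pl j) C
  have h2 : cost P C ≤ ∑ j ∈ R, b j * cost (Pl j) C := by
    simp only [cost]
    rw [swap_sum_aux P R Pl hPl b (fun p => distToSet p C)]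
    refine Finset.sum_le_sum fun p hp => ?_
    exact le_mul_of_one_le_left (distToSet_nonneg p C) (hcov p hp).1
  -- ∑ j b j * cost (Pl j) C ≤ (1+δ) cost P C
  have h3 : ∑ j ∈ R, b j * cost (Pl j) C ≤ (1 + δ) * cost P C := by
    simp only [cost]
    rw [swap_sum_aux P R Pl hPl b (fun p => distToSet p C), Finset.mul_sum]
    refine Finset.sum_le_sum fun p hp => ?_
    exact mul_le_mul_of_nonneg_right (hcov p hp).2 (distToSet_nonneg p C)
  constructor
  · -- lower bound
    have h1 : ∀ j ∈ R, cost (Pl j) C - cost (Pl j) (Y j)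
        ≤ ∑ x ∈ Pl j, distToSet (cl j x) C := by
      intro j hj
      rw [cost, cost, ← Finset.sum_sub_distrib]
      refine Finset.sum_le_sum fun x hx => ?_
      obtain ⟨hmem, heq⟩ := hcl j hj x hx
      have htri : distToSet x C ≤ dist x (cl j x) + distToSet (cl j x) C :=
        distToSet_triangle x (cl j x) hCne
      rw [← heq]
      linarith
    have hstep : ∑ j ∈ R, b j * (cost (Pl j) C - cost (Pl j) (Y j))
        ≤ ∑ j ∈ R, b j * ∑ y ∈ Y j,
          (((Pl j).filter (fun x => cl j x = y)).card : ℝ) * distToSet y C := by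
      refine Finset.sum_le_sum fun j hj => ?_
      rw [hS j hj]
      exact mul_le_mul_of_nonneg_left (h1 j hj) (hb j hj)
    have hsplit : ∑ j ∈ R, b j * (cost (Pl j) C - cost (Pl j) (Y j))
        = (∑ j ∈ R, b j * cost (Pl j) C) - ∑ j ∈ R, b j * cost (Pl j) (Y j) := by
      rw [← Finset.sum_sub_distrib]
      exact Finset.sum_congr rfl fun j _ => mul_sub _ _ _
    linarith
  · -- upper bound
    have h4 : ∀ j ∈ R, ∑ x ∈ Pl j, distToSet (cl j x) C ≤ 2 * cost (Pl j) C := by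
      intro j hj
      have : ∑ x ∈ Pl j, distToSet (cl j x) C
          ≤ ∑ x ∈ Pl j, (dist x (cl j x) + distToSet x C) := by
        refine Finset.sum_le_sum fun x hx => ?_
        have := distToSet_triangle (cl j x) x hCne
        rwa [dist_comm (cl j x) x] at this
      have hsum : ∑ x ∈ Pl j, (dist x (cl j x) + distToSet x C)
          = cost (Pl j) (Y j) + cost (Pl j) C := by
        rw [Finset.sum_add_distrib, cost, cost]
        congr 1
        exact Finset.sum_congr rfl fun x hx => (hcl j hj x hx).2
      have hopt := hYopt j hj C hCk hCne
      linarith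
    have hstep : ∑ j ∈ R, b j * ∑ y ∈ Y j,
          (((Pl j).filter (fun x => cl j x = y)).card : ℝ) * distToSet y C
        ≤ ∑ j ∈ R, b j * (2 * cost (Pl j) C) := by
      refine Finset.sum_le_sum fun j hj => ?_
      rw [hS j hj]
      exact mul_le_mul_of_nonneg_left (h4 j hj) (hb j hj)
    have hfac : ∑ j ∈ R, b j * (2 * cost (Pl j) C)
        = 2 * ∑ j ∈ R, b j * cost (Pl j) C := by
      rw [Finset.mul_sum]
      exact Finset.sum_congr rfl fun j _ => by ring
    calc ∑ j ∈ R, b j * ∑ y ∈ Y j,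
          (((Pl j).filter (fun x => cl j x = y)).card : ℝ) * distToSet y C
        ≤ 2 * ∑ j ∈ R, b j * cost (Pl j) C := by rw [← hfac]; exact hstep
      _ ≤ 2 * ((1 + δ) * cost P C) := by linarith
      _ = 2 * (1 + δ) * cost P C := by ring
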